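/- Every unit disk graph of height √3 admits a conflict-free 2-coloring. That is, if V is a finite set and p : V → ℝ² assigns to each vertex a point whose y-coordinate lies in [0, √3], then the simple graph on V in which distinct u, v are adjacent if and only if the Euclidean distance between p(u) and p(v) is at most 2 admits a conflict-free 2-coloring. -/

import Mathlib

/-- A conflict-free coloring of `G` with `k` colors: a partial coloring
(uncolored vertices get `none`) such that every vertex has, in its closed
neighborhood, a colored vertex whose color occurs exactly once there. -/
def IsCFColoring {V : Type*} (G : SimpleGraph V) {k : ℕ} (χ : V → Option (Fin k)) : Prop :=
  ∀ v : V, ∃ u ∈ insert v (G.neighborSet v), (χ u).isSome ∧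
    ∀ w ∈ insert v (G.neighborSet v), χ w = χ u → w = u

/-- `G` admits a conflict-free coloring with `k` colors. -/
def HasCFColoring {V : Type*} (G : SimpleGraph V) (k : ℕ) : Prop :=
  ∃ χ : V → Option (Fin k), IsCFColoring G χ

/-- The unit disk graph on points `p`: distinct vertices are adjacent iff the
Euclidean distance of their points is at most 2 (the unit disks intersect). -/
def unitDiskGraph {V : Type*} (p : V → EuclideanSpace ℝ (Fin 2)) : SimpleGraph V where
  Adj u v := u ≠ v ∧ dist (p u) (p v) ≤ 2
  symm := by
    constructor
    intro u v ⟨h1, h2⟩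
    exact ⟨h1.symm, by rwa [dist_comm]⟩
  loopless := by
    constructor
    intro v ⟨h1, _⟩
    exact h1 rfl

section CFGreedy

variable {V : Type*} [Fintype V]

lemma exists_pick (x : V → ℝ) (t : ℝ) (h : ∃ v : V, t < x v) :
    ∃ s : V, t < x s ∧ (∀ v, t < x v → x v ≤ x s + 1 → |x v - x s| ≤ 1) ∧
      ∃ u, t < x u ∧ x u ≤ x s ∧ ∀ w, x w ≤ x u + 1 → x w ≤ x s := by
  classical
  obtain ⟨v0, hv0⟩ := h
  have hA : (Finset.univ.filter fun v => t < x v).Nonempty := ⟨v0, by simp [hv0]⟩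
  obtain ⟨u, hu, humin⟩ := Finset.exists_min_image _ x hA
  simp only [Finset.mem_filter, Finset.mem_univ, true_and] at hu
  have hB : (Finset.univ.filter fun w => x w ≤ x u + 1).Nonempty :=
    ⟨u, by simp⟩
  obtain ⟨s, hs, hsmax⟩ := Finset.exists_max_image _ x hB
  simp only [Finset.mem_filter, Finset.mem_univ, true_and] at hs
  have hus : x u ≤ x s := hsmax u (by simp)
  refine ⟨s, by linarith, ?_, u, hu, hus, ?_⟩
  · intro v hv hv1
    have hxu : x u ≤ x v := humin v (by simp [hv])
    rw [abs_le]
    constructor <;> linarith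
  · intro w hw
    exact hsmax w (by simp [hw])

open Classical in
noncomputable def pick (x : V → ℝ) (t : ℝ) : Option V :=
  if h : ∃ v : V, t < x v then some (exists_pick x t h).choose else none

lemma pick_spec {x : V → ℝ} {t : ℝ} {s : V} (h : pick x t = some s) :
    t < x s ∧ (∀ v, t < x v → x v ≤ x s + 1 → |x v - x s| ≤ 1) ∧
      ∃ u, t < x u ∧ x u ≤ x s ∧ ∀ w, x w ≤ x u + 1 → x w ≤ x s := by
  unfold pick at h
  split_ifs at h with h'
  · have := Option.some.inj h
    exact this ▸ (exists_pick x t h').choose_spec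

lemma pick_none {x : V → ℝ} {t : ℝ} (h : pick x t = none) : ∀ v : V, x v ≤ t := by
  unfold pick at h
  split_ifs at h with h'
  · push_neg at h'
    exact h'

lemma pick_isSome {x : V → ℝ} {t : ℝ} (h : ∃ v : V, t < x v) :
    ∃ s, pick x t = some s := by
  unfold pick
  rw [dif_pos h]
  exact ⟨_, rfl⟩

variable [Nonempty V]

noncomputable def lowb (x : V → ℝ) : ℝ :=
  Finset.univ.inf' Finset.univ_nonempty x - 1

lemma lowb_lt (x : V → ℝ) (v : V) : lowb x < x v := by
  have := Finset.inf'_le x (Finset.mem_univ v)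
  unfold lowb
  linarith

noncomputable def seqF (x : V → ℝ) : ℕ → Option V
  | 0 => pick x (lowb x)
  | (i + 1) => (seqF x i).bind fun s => pick x (x s + 1)

lemma seqF_succ {x : V → ℝ} {i : ℕ} {s' : V} (h : seqF x (i + 1) = some s') :
    ∃ s, seqF x i = some s ∧ pick x (x s + 1) = some s' := by
  have h' : (seqF x i).bind (fun s => pick x (x s + 1)) = some s' := h
  cases hs : seqF x i with
  | none => rw [hs] at h'; simp at h'
  | some s => rw [hs] at h'; exact ⟨s, rfl, h'⟩

lemma seqF_gap (x : V → ℝ) (j : ℕ) : ∀ i s s', seqF x i = some s →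
    seqF x (i + j + 1) = some s' → x s + ((j : ℝ) + 1) < x s' := by
  induction j with
  | zero =>
    intro i s s' hi hij
    obtain ⟨s0, hs0, hpick⟩ := seqF_succ hij
    rw [hi] at hs0
    obtain rfl := Option.some.inj hs0
    have := (pick_spec hpick).1
    push_cast
    linarith
  | succ j ih =>
    intro i s s' hi hij
    obtain ⟨sm, hsm, hpick⟩ := seqF_succ (show seqF x ((i + j + 1) + 1) = some s' by
      rw [show i + j + 1 + 1 = i + (j + 1) + 1 from by omega]; exact hij)
    have h1 := ih i s sm hi hsm
    have h2 := (pick_spec hpick).1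
    push_cast
    linarith

lemma seqF_inj (x : V → ℝ) {i j : ℕ} {s : V} (hi : seqF x i = some s)
    (hj : seqF x j = some s) : i = j := by
  by_contra hne
  rcases Nat.lt_or_ge i j with h | h
  · obtain ⟨k, rfl⟩ : ∃ k, j = i + k + 1 := ⟨j - i - 1, by omega⟩
    have := seqF_gap x k i s s hi hj
    have hk : (0 : ℝ) ≤ (k : ℝ) := Nat.cast_nonneg k
    linarith
  · have hlt : j < i := by omega
    obtain ⟨k, rfl⟩ : ∃ k, i = j + k + 1 := ⟨i - j - 1, by omega⟩
    have := seqF_gap x k j s s hj hi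
    have hk : (0 : ℝ) ≤ (k : ℝ) := Nat.cast_nonneg k
    linarith

lemma seqF_cover_aux (x : V → ℝ) : ∀ i s, seqF x i = some s → ∀ v, x v ≤ x s + 1 →
    ∃ j s', seqF x j = some s' ∧ |x v - x s'| ≤ 1 := by
  intro i
  induction i with
  | zero =>
    intro s hs v hv
    have spec := pick_spec (show pick x (lowb x) = some s from hs)
    exact ⟨0, s, hs, spec.2.1 v (lowb_lt x v) hv⟩
  | succ i ih =>
    intro s hs v hv
    obtain ⟨sp, hsp, hpick⟩ := seqF_succ hs
    by_cases hc : x v ≤ x sp + 1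
    · exact ih sp hsp v hc
    · push_neg at hc
      exact ⟨i + 1, s, hs, (pick_spec hpick).2.1 v hc hv⟩

lemma seqF_last (x : V → ℝ) : ∃ i s, seqF x i = some s ∧ ∀ v, x v ≤ x s + 1 := by
  classical
  obtain ⟨s0, hs0⟩ : ∃ s0, seqF x 0 = some s0 :=
    pick_isSome ⟨Classical.arbitrary V, lowb_lt x _⟩
  set M := Finset.univ.sup' Finset.univ_nonempty x with hM
  have hbd : ∀ v : V, x v ≤ M := fun v => Finset.le_sup' x (Finset.mem_univ v)
  have hnone : ∃ n, seqF x n = none := by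
    by_contra hc
    push_neg at hc
    obtain ⟨n, hn⟩ := exists_nat_gt (M - x s0)
    cases hsn : seqF x (0 + n + 1) with
    | none => exact hc _ hsn
    | some sn =>
      have := seqF_gap x n 0 s0 sn hs0 hsn
      have := hbd sn
      linarith
  have h0 : Nat.find hnone ≠ 0 := by
    intro h
    have := Nat.find_spec hnone
    rw [h, hs0] at this
    exact absurd this (by simp)
  obtain ⟨m, hm⟩ : ∃ m, Nat.find hnone = m + 1 := ⟨Nat.find hnone - 1, by omega⟩
  have hmlt : m < Nat.find hnone := by omega
  have hmne := Nat.find_min hnone hmlt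
  cases hsm : seqF x m with
  | none => exact absurd hsm hmne
  | some s =>
    have hnext : seqF x (m + 1) = none := by rw [← hm]; exact Nat.find_spec hnone
    have : pick x (x s + 1) = none := by
      have h' : (seqF x m).bind (fun t => pick x (x t + 1)) = none := hnext
      rw [hsm] at h'
      exact h'
    refine ⟨m, s, hsm, fun v => ?_⟩
    exact pick_none this v

lemma seqF_cover (x : V → ℝ) (v : V) :
    ∃ j s, seqF x j = some s ∧ |x v - x s| ≤ 1 := by
  obtain ⟨i, s, hs, hall⟩ := seqF_last x
  exact seqF_cover_aux x i s hs v (hall v)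

noncomputable def chi (x : V → ℝ) : V → Option (Fin 2) := by
  classical
  exact fun v =>
    if h : ∃ i, seqF x i = some v then
      some ⟨Nat.find h % 2, Nat.mod_lt _ (by norm_num)⟩
    else none

lemma chi_eq {x : V → ℝ} {j : ℕ} {w : V} (hw : seqF x j = some w) :
    chi x w = some ⟨j % 2, Nat.mod_lt _ (by norm_num)⟩ := by
  classical
  unfold chi
  split_ifs with h'
  · have hfind : Nat.find h' = j := seqF_inj x (Nat.find_spec h') hw
    simp [hfind]
  · exact absurd ⟨j, hw⟩ h'

lemma chi_spec {x : V → ℝ} {w : V} {c : Fin 2} (h : chi x w = some c) :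
    ∃ j, seqF x j = some w ∧ c.val = j % 2 := by
  classical
  unfold chi at h
  split_ifs at h with h'
  · refine ⟨Nat.find h', Nat.find_spec h', ?_⟩
    have := Option.some.inj h
    rw [← this]

end CFGreedy

theorem stmt7 {V : Type*} [Fintype V] (p : V → EuclideanSpace ℝ (Fin 2))
    (hp : ∀ v : V, p v 1 ∈ Set.Icc (0 : ℝ) (Real.sqrt 3)) :
    HasCFColoring (unitDiskGraph p) 2 := by
  classical
  by_cases hV : Nonempty V
  swap
  · exact ⟨fun _ => none, fun v => absurd ⟨v⟩ hV⟩
  set x : V → ℝ := fun v => p v 0 with hxdef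
  -- geometry
  have hdist : ∀ u w : V, dist (p u) (p w) =
      Real.sqrt ((x u - x w) ^ 2 + (p u 1 - p w 1) ^ 2) := by
    intro u w
    rw [EuclideanSpace.dist_eq, Fin.sum_univ_two]
    simp [Real.dist_eq, sq_abs, hxdef]
  have key : ∀ u w : V, u ≠ w → |x u - x w| ≤ 1 → (unitDiskGraph p).Adj u w := by
    intro u w hne hle
    have h1 := hp u
    have h2 := hp w
    simp only [Set.mem_Icc] at h1 h2
    have h3 : Real.sqrt 3 ^ 2 = 3 := Real.sq_sqrt (by norm_num)
    have hy : (p u 1 - p w 1) ^ 2 ≤ 3 := by nlinarith [h1.1, h1.2, h2.1, h2.2]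
    have hxab := abs_le.mp hle
    have hx2 : (x u - x w) ^ 2 ≤ 1 := by nlinarith [hxab.1, hxab.2]
    refine ⟨hne, ?_⟩
    rw [hdist]
    calc Real.sqrt ((x u - x w) ^ 2 + (p u 1 - p w 1) ^ 2)
        ≤ Real.sqrt 4 := Real.sqrt_le_sqrt (by linarith)
      _ = 2 := by
          rw [show (4 : ℝ) = 2 ^ 2 by norm_num, Real.sqrt_sq (by norm_num : (0:ℝ) ≤ 2)]
  have bnd : ∀ u w : V, (unitDiskGraph p).Adj u w → |x u - x w| ≤ 2 := by
    intro u w h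
    obtain ⟨hne, hd⟩ := h
    rw [← Real.sqrt_sq_eq_abs]
    calc Real.sqrt ((x u - x w) ^ 2)
        ≤ Real.sqrt ((x u - x w) ^ 2 + (p u 1 - p w 1) ^ 2) :=
          Real.sqrt_le_sqrt (by nlinarith [sq_nonneg (p u 1 - p w 1)])
      _ = dist (p u) (p w) := (hdist u w).symm
      _ ≤ 2 := hd
  have memN : ∀ v u : V, u ∈ insert v ((unitDiskGraph p).neighborSet v) ↔
      (u = v ∨ (unitDiskGraph p).Adj v u) := by
    intro v u
    simp [SimpleGraph.mem_neighborSet]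
  have memN_bnd : ∀ v u : V, u ∈ insert v ((unitDiskGraph p).neighborSet v) →
      |x v - x u| ≤ 2 := by
    intro v u h
    rcases (memN v u).1 h with rfl | h
    · simp
    · exact bnd v u h
  have memN_of_close : ∀ v u : V, |x v - x u| ≤ 1 →
      u ∈ insert v ((unitDiskGraph p).neighborSet v) := by
    intro v u hle
    rcases eq_or_ne u v with rfl | hne
    · exact Set.mem_insert _ _
    · exact (memN v u).2 (Or.inr (key v u hne.symm hle))
  refine ⟨chi x, fun v => ?_⟩
  -- coverage
  obtain ⟨j0, s', hj0, hcov1⟩ := seqF_cover x v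
  have hex : ∃ i, ∃ s, seqF x i = some s ∧
      s ∈ insert v ((unitDiskGraph p).neighborSet v) :=
    ⟨j0, s', hj0, memN_of_close v s' hcov1⟩
  set i := Nat.find hex with hidef
  obtain ⟨si, hsi, hsiN⟩ := Nat.find_spec hex
  have hvd_i : |x v - x si| ≤ 2 := memN_bnd v si hsiN
  -- window lemma
  have window : ∀ j sj, seqF x j = some sj →
      sj ∈ insert v ((unitDiskGraph p).neighborSet v) → i ≤ j ∧ j ≤ i + 2 := by
    intro j sj hj hjN
    have hle : i ≤ j := by
      by_contra hlt
      push_neg at hlt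
      exact Nat.find_min hex hlt ⟨sj, hj, hjN⟩
    refine ⟨hle, ?_⟩
    by_contra hgt
    push_neg at hgt
    have hvd_j : |x v - x sj| ≤ 2 := memN_bnd v sj hjN
    have habs_i := abs_le.mp hvd_i
    have habs_j := abs_le.mp hvd_j
    by_cases h4 : i + 4 ≤ j
    · obtain ⟨k, rfl⟩ : ∃ k, j = i + k + 1 := ⟨j - i - 1, by omega⟩
      have hgap := seqF_gap x k i si sj hsi hj
      have hk : (3 : ℝ) ≤ (k : ℝ) := by exact_mod_cast (by omega : 3 ≤ k)
      linarith
    · have hj3 : j = i + 3 := by omega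
      subst hj3
      obtain ⟨s2, hs2, _⟩ := seqF_succ (show seqF x ((i + 2) + 1) = some sj from hj)
      obtain ⟨s1, hs1, hpick2⟩ := seqF_succ hs2
      obtain ⟨s0, hs0, hpick1⟩ := seqF_succ hs1
      rw [hsi] at hs0
      obtain rfl := Option.some.inj hs0
      obtain ⟨-, -, u, hu1, hu2, hu3⟩ := pick_spec hpick1
      by_cases hvu : x v ≤ x u + 1
      · have hvs1 : x v ≤ x s1 := hu3 v hvu
        have hgap := seqF_gap x 1 (i + 1) s1 sj hs1
          (show seqF x ((i + 1) + 1 + 1) = some sj from hj)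
        simp only [Nat.cast_one] at hgap
        linarith
      · push_neg at hvu
        linarith
  -- middle fill
  have middle : ∀ s2, seqF x (i + 2) = some s2 →
      s2 ∈ insert v ((unitDiskGraph p).neighborSet v) →
      ∃ s1, seqF x (i + 1) = some s1 ∧
        s1 ∈ insert v ((unitDiskGraph p).neighborSet v) := by
    intro s2 hs2 hs2N
    obtain ⟨s1, hs1, hpick⟩ := seqF_succ hs2
    have hg1 : x si + 1 < x s1 := by
      have := seqF_gap x 0 i si s1 hsi (show seqF x (i + 0 + 1) = some s1 by
        rw [← hs1])
      simpa using this
    have hg2 : x s1 + 1 < x s2 := by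
      have := seqF_gap x 0 (i + 1) s1 s2 hs1 (show seqF x ((i+1) + 0 + 1) = some s2 by
        rw [← hs2])
      simpa using this
    have habs_i := abs_le.mp hvd_i
    have habs_2 := abs_le.mp (memN_bnd v s2 hs2N)
    have hclose : |x v - x s1| ≤ 1 := abs_le.mpr ⟨by linarith, by linarith⟩
    exact ⟨s1, hs1, memN_of_close v s1 hclose⟩
  -- colored index extraction
  have getIdx : ∀ w : V, ∀ c : Fin 2, chi x w = some c →
      ∃ j, seqF x j = some w ∧ c.val = j % 2 := fun w c h => chi_spec h
  -- main case split
  by_cases hP : ∃ s1, seqF x (i + 1) = some s1 ∧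
      s1 ∈ insert v ((unitDiskGraph p).neighborSet v)
  · obtain ⟨s1, hs1, hs1N⟩ := hP
    refine ⟨s1, hs1N, ?_, ?_⟩
    · rw [chi_eq hs1]; rfl
    · intro w hw hχw
      rw [chi_eq hs1] at hχw
      obtain ⟨j, hjw, hjpar⟩ := getIdx w _ hχw
      have hwin := window j w hjw hw
      have hj : j = i + 1 := by
        have : j % 2 = (i + 1) % 2 := hjpar.symm
        omega
      rw [hj] at hjw
      exact Option.some.inj (hjw.symm.trans hs1)
  · refine ⟨si, hsiN, ?_, ?_⟩
    · rw [chi_eq hsi]; rfl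
    · intro w hw hχw
      rw [chi_eq hsi] at hχw
      obtain ⟨j, hjw, hjpar⟩ := getIdx w _ hχw
      have hwin := window j w hjw hw
      have hj1 : j ≠ i + 1 := by
        intro h
        rw [h] at hjw
        exact hP ⟨w, hjw, hw⟩
      have hj2 : j ≠ i + 2 := by
        intro h
        rw [h] at hjw
        exact hP (middle w hjw hw)
      have hj : j = i := by omega
      rw [hj] at hjw
      exact Option.some.inj (hjw.symm.trans hsi)
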